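/- For every nonnegative integer q, ∑_{h=−2^{q+1}}^{2^{q+1}−1} (2/π²) · ∫_0^{1/2} sin²(πx)/(x + h)² dx = 2·Si(2^{q+2}·π)/π, where Si(y) = ∫_0^y (sin t)/t dt. In particular, for q = 0 the sum ∑_{h=−2}^{1} (2/π²) · ∫_0^{1/2} sin²(πx)/(x + h)² dx equals (2/π²)·∫_0^2 sin²(πx)/x² dx = 2·Si(4π)/π ≈ 0.9499. -/

import Mathlib

open Real intervalIntegral MeasureTheory Set

private lemma aux_intble_of_bounded {f : ℝ → ℝ} (hf : Measurable f) {C : ℝ}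
    (hC : ∀ x, |f x| ≤ C) (a b : ℝ) : IntervalIntegrable f volume a b := by
  rw [intervalIntegrable_iff]
  refine Measure.integrableOn_of_bounded (M := C) ?_ hf.aestronglyMeasurable ?_
  · exact (measure_Ioc_lt_top).ne
  · exact Filter.Eventually.of_forall fun x => by simpa using hC x

private lemma aux_sin_sq_bound (x : ℝ) : Real.sin (π * x) ^ 2 ≤ π ^ 2 * x ^ 2 := by
  simpa [mul_pow] using Real.sin_sq_le_sq (x := π * x)

private lemma aux_f_intble (a b : ℝ) :
    IntervalIntegrable (fun x => Real.sin (π * x) ^ 2 / x ^ 2) volume a b := by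
  refine aux_intble_of_bounded (C := π ^ 2)
    (((Real.measurable_sin.comp (measurable_id.const_mul π)).pow_const 2).div
      (measurable_id.pow_const 2)) (fun x => ?_) a b
  show |Real.sin (π * x) ^ 2 / x ^ 2| ≤ π ^ 2
  rcases eq_or_ne x 0 with h | h
  · simp [h]; positivity
  · rw [abs_of_nonneg (by positivity), div_le_iff₀ (by positivity)]
    exact aux_sin_sq_bound x

private lemma aux_D_intble (a b : ℝ) :
    IntervalIntegrable (fun x => π * (2 * π) * (Real.sin (2 * π * x) / (2 * π * x)))
      volume a b := by
  refine aux_intble_of_bounded (C := 2 * π ^ 2)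
    (measurable_const.mul ((Real.measurable_sin.comp (measurable_id.const_mul (2*π))).div
      (measurable_id.const_mul (2*π)))) (fun x => ?_) a b
  rcases eq_or_ne x 0 with h | h
  · simp [h]; positivity
  · have h2 : (2:ℝ) * π * x ≠ 0 := by
      have := Real.pi_ne_zero; positivity
    have hb : |Real.sin (2*π*x) / (2*π*x)| ≤ 1 := by
      rw [abs_div, div_le_one (abs_pos.2 h2)]
      exact Real.abs_sin_le_abs
    calc |π * (2*π) * (Real.sin (2*π*x)/(2*π*x))|
        = (π * (2*π)) * |Real.sin (2*π*x)/(2*π*x)| := by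
          rw [abs_mul, abs_of_nonneg (by positivity)]
      _ ≤ (π * (2*π)) * 1 := mul_le_mul_of_nonneg_left hb (by positivity)
      _ = 2 * π ^ 2 := by ring

private lemma aux_sinc_intble (a b : ℝ) :
    IntervalIntegrable (fun t => Real.sin t / t) volume a b := by
  refine aux_intble_of_bounded (C := 1)
    (Real.measurable_sin.div measurable_id) (fun x => ?_) a b
  show |Real.sin x / x| ≤ 1
  rcases eq_or_ne x 0 with h | h
  · simp [h]
  · rw [abs_div, div_le_one (abs_pos.2 h)]
    exact Real.abs_sin_le_abs

private lemma aux_intKey (M : ℕ) :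
    (∫ x in (0:ℝ)..(M:ℝ), Real.sin (π * x) ^ 2 / x ^ 2)
      = π * ∫ t in (0:ℝ)..(2 * π * M), Real.sin t / t := by
  set G : ℝ → ℝ := fun x => -(Real.sin (π * x) ^ 2 / x) with hG
  set D : ℝ → ℝ := fun x => π * (2 * π) * (Real.sin (2 * π * x) / (2 * π * x)) with hD
  have hπ := Real.pi_ne_zero
  have hcont : ContinuousOn G (Set.Icc 0 (M:ℝ)) := by
    intro x hx
    rcases eq_or_ne x 0 with h | h
    · subst h
      have h0 : G 0 = 0 := by simp [hG]
      rw [ContinuousWithinAt, h0]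
      apply squeeze_zero_norm (a := fun x : ℝ => π ^ 2 * |x|)
      · intro y
        rcases eq_or_ne y 0 with hy | hy
        · simp [hG, hy]
        · have h1 : ‖G y‖ = Real.sin (π*y)^2 / |y| := by
            rw [hG]
            simp only [norm_neg, Real.norm_eq_abs, abs_div, abs_pow, sq_abs]
          rw [h1, div_le_iff₀ (abs_pos.2 hy)]
          calc Real.sin (π*y)^2 ≤ π^2 * y^2 := aux_sin_sq_bound y
            _ = π^2 * |y| * |y| := by rw [mul_assoc, abs_mul_abs_self]; ring
      · have h2 : Continuous (fun x : ℝ => π ^ 2 * |x|) := continuous_const.mul continuous_abs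
        have h3 := h2.tendsto 0
        simp only [abs_zero, mul_zero] at h3
        exact h3.mono_left nhdsWithin_le_nhds
    · apply ContinuousAt.continuousWithinAt
      apply ContinuousAt.neg
      exact (((Real.continuous_sin.comp (continuous_const.mul continuous_id)).pow 2).continuousAt).div
        continuousAt_id h
  have hderiv : ∀ x ∈ Set.Ioo (0:ℝ) (M:ℝ), HasDerivWithinAt G
      (Real.sin (π * x) ^ 2 / x ^ 2 - D x) (Set.Ioi x) x := by
    intro x hx
    have hx0 : x ≠ 0 := ne_of_gt hx.1
    have h1 : HasDerivAt (fun y : ℝ => π * y) π x := by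
      simpa using (hasDerivAt_id x).const_mul π
    have hu : HasDerivAt (fun y => Real.sin (π * y) ^ 2)
        (2 * Real.sin (π * x) ^ 1 * (Real.cos (π * x) * π)) x := h1.sin.pow 2
    have hd : HasDerivAt G
        (-((2 * Real.sin (π * x) ^ 1 * (Real.cos (π * x) * π) * x
            - Real.sin (π * x) ^ 2 * 1) / x ^ 2)) x :=
      ((hu.div (hasDerivAt_id x) hx0)).neg
    have heq : -((2 * Real.sin (π * x) ^ 1 * (Real.cos (π * x) * π) * x
            - Real.sin (π * x) ^ 2 * 1) / x ^ 2)
        = Real.sin (π * x) ^ 2 / x ^ 2 - D x := by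
      have h2 : Real.sin (2 * π * x) = 2 * Real.sin (π * x) * Real.cos (π * x) := by
        rw [show 2 * π * x = 2 * (π * x) by ring, Real.sin_two_mul]
      simp only [hD, h2]
      field_simp
      ring
    rw [heq] at hd
    exact hd.hasDerivWithinAt
  have hDint : IntervalIntegrable D volume 0 (M:ℝ) := aux_D_intble 0 (M:ℝ)
  have hint : IntervalIntegrable (fun x => Real.sin (π * x) ^ 2 / x ^ 2 - D x)
      volume 0 (M:ℝ) := (aux_f_intble 0 (M:ℝ)).sub hDint
  have hftc := intervalIntegral.integral_eq_sub_of_hasDeriv_right_of_le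
    (f := G) (f' := fun x => Real.sin (π * x) ^ 2 / x ^ 2 - D x)
    (Nat.cast_nonneg M) hcont hderiv hint
  have hGM : G (M:ℝ) = 0 := by
    rw [hG]
    simp only
    rw [show π * (M:ℝ) = (M:ℝ) * π by ring, Real.sin_nat_mul_pi]
    simp
  have hG0 : G 0 = 0 := by simp [hG]
  rw [hGM, hG0, sub_zero] at hftc
  have hsplit : (∫ x in (0:ℝ)..(M:ℝ), (Real.sin (π * x) ^ 2 / x ^ 2 - D x))
      = (∫ x in (0:ℝ)..(M:ℝ), Real.sin (π * x) ^ 2 / x ^ 2)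
        - ∫ x in (0:ℝ)..(M:ℝ), D x :=
    intervalIntegral.integral_sub (aux_f_intble 0 (M:ℝ)) hDint
  have hmain : (∫ x in (0:ℝ)..(M:ℝ), Real.sin (π * x) ^ 2 / x ^ 2)
      = ∫ x in (0:ℝ)..(M:ℝ), D x := by
    have := hsplit.symm.trans hftc
    linarith
  rw [hmain, hD]
  have hcomp : (∫ x in (0:ℝ)..(M:ℝ), (fun t => Real.sin t / t) (2 * π * x))
      = (2*π)⁻¹ • ∫ t in (2*π*0)..(2*π*(M:ℝ)), Real.sin t / t :=
    intervalIntegral.integral_comp_mul_left (fun t => Real.sin t / t)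
      (by positivity : (2:ℝ)*π ≠ 0)
  simp only [mul_zero] at hcomp
  simp only
  rw [intervalIntegral.integral_const_mul]
  rw [show (fun x : ℝ => Real.sin (2*π*x) / (2*π*x)) = fun x : ℝ => (fun t => Real.sin t / t) (2*π*x) from rfl] at *
  rw [hcomp, smul_eq_mul]
  field_simp

private lemma aux_shift (h : ℤ) :
    (∫ x in (0:ℝ)..(1/2), Real.sin (π * x) ^ 2 / (x + h) ^ 2)
      = ∫ x in (h:ℝ)..((h:ℝ) + 1/2), Real.sin (π * x) ^ 2 / x ^ 2 := by
  have key := intervalIntegral.integral_comp_add_right (a := (0:ℝ)) (b := 1/2)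
    (fun y => Real.sin (π * y) ^ 2 / y ^ 2) (h:ℝ)
  have heq : ∀ x : ℝ, Real.sin (π * (x + (h:ℝ))) ^ 2 / (x + (h:ℝ)) ^ 2
      = Real.sin (π * x) ^ 2 / (x + (h:ℝ)) ^ 2 := by
    intro x
    have h1 : π * (x + (h:ℝ)) = π * x + (h:ℤ) * π := by push_cast; ring
    have h3 : ((-1:ℝ) ^ h) ^ 2 = 1 := by
      rcases Int.even_or_odd h with he | ho
      · rw [he.neg_one_zpow]; norm_num
      · rw [Odd.neg_one_zpow ho]; norm_num
    rw [h1, Real.sin_add_int_mul_pi, mul_pow, h3, one_mul]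
  simp only [heq] at key
  rw [key]
  norm_num [add_comm]

private lemma aux_even (a b : ℝ) :
    (∫ x in a..b, Real.sin (π * x) ^ 2 / x ^ 2)
      = ∫ x in (-b)..(-a), Real.sin (π * x) ^ 2 / x ^ 2 := by
  have key := intervalIntegral.integral_comp_neg (a := a) (b := b)
    (fun y => Real.sin (π * y) ^ 2 / y ^ 2)
  have heq : ∀ x : ℝ, Real.sin (π * (-x)) ^ 2 / (-x) ^ 2
      = Real.sin (π * x) ^ 2 / x ^ 2 := by
    intro x
    rw [show π * (-x) = -(π * x) by ring, Real.sin_neg, neg_sq, neg_sq]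
  simp only [heq] at key
  exact key

private lemma aux_sumKey (M : ℕ) :
    (∑ h ∈ Finset.Icc (-(M:ℤ)) ((M:ℤ) - 1),
        ∫ x in (0:ℝ)..(1/2), Real.sin (π * x) ^ 2 / (x + h) ^ 2)
      = ∫ x in (0:ℝ)..(M:ℝ), Real.sin (π * x) ^ 2 / x ^ 2 := by
  induction M with
  | zero =>
      have he : Finset.Icc (-((0:ℕ):ℤ)) (((0:ℕ):ℤ) - 1) = ∅ := by
        ext x; simp only [Finset.mem_Icc, Finset.notMem_empty, iff_false]; omega
      rw [he]
      simp
  | succ M ih =>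
      have hset : Finset.Icc (-(((M:ℕ)+1:ℕ):ℤ)) ((((M:ℕ)+1:ℕ):ℤ) - 1)
          = insert (-(M:ℤ)-1) (insert (M:ℤ) (Finset.Icc (-(M:ℤ)) ((M:ℤ) - 1))) := by
        ext x
        simp only [Finset.mem_Icc, Finset.mem_insert]
        push_cast
        omega
      rw [hset, Finset.sum_insert (by simp only [Finset.mem_insert, Finset.mem_Icc]; push_cast; omega),
        Finset.sum_insert (by simp only [Finset.mem_Icc]; omega), ih]
      rw [aux_shift, aux_shift]
      have e1 : (∫ x in ((((-(M:ℤ)-1):ℤ)):ℝ)..((((-(M:ℤ)-1):ℤ)):ℝ)+1/2, Real.sin (π * x) ^ 2 / x ^ 2)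
          = ∫ x in ((M:ℝ)+1/2)..((M:ℝ)+1), Real.sin (π * x) ^ 2 / x ^ 2 := by
        rw [aux_even]
        push_cast
        rw [show -(-(M:ℝ)-1+1/2) = (M:ℝ)+1/2 by ring, show -(-(M:ℝ)-1) = (M:ℝ)+1 by ring]
      rw [e1]
      have h1 : (∫ x in (0:ℝ)..((M:ℝ)), Real.sin (π * x) ^ 2 / x ^ 2)
          + (∫ x in ((M:ℝ))..((M:ℝ)+1/2), Real.sin (π * x) ^ 2 / x ^ 2)
          = ∫ x in (0:ℝ)..((M:ℝ)+1/2), Real.sin (π * x) ^ 2 / x ^ 2 :=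
        intervalIntegral.integral_add_adjacent_intervals (aux_f_intble _ _) (aux_f_intble _ _)
      have h2 : (∫ x in (0:ℝ)..((M:ℝ)+1/2), Real.sin (π * x) ^ 2 / x ^ 2)
          + (∫ x in ((M:ℝ)+1/2)..((M:ℝ)+1), Real.sin (π * x) ^ 2 / x ^ 2)
          = ∫ x in (0:ℝ)..((M:ℝ)+1), Real.sin (π * x) ^ 2 / x ^ 2 :=
        intervalIntegral.integral_add_adjacent_intervals (aux_f_intble _ _) (aux_f_intble _ _)
      push_cast
      linarith

theorem stmt_16 :
    (∀ q : ℕ,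
      ∑ h ∈ Finset.Icc (-(2 ^ (q + 1)) : ℤ) (2 ^ (q + 1) - 1),
          (2 / π ^ 2) * ∫ x in (0 : ℝ)..(1 / 2), Real.sin (π * x) ^ 2 / (x + h) ^ 2
        = 2 * (∫ t in (0 : ℝ)..(2 ^ (q + 2) * π), Real.sin t / t) / π)
    ∧
    (∑ h ∈ Finset.Icc (-2 : ℤ) 1,
          (2 / π ^ 2) * ∫ x in (0 : ℝ)..(1 / 2), Real.sin (π * x) ^ 2 / (x + h) ^ 2
        = (2 / π ^ 2) * ∫ x in (0 : ℝ)..2, Real.sin (π * x) ^ 2 / x ^ 2)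
    ∧
    ((2 / π ^ 2) * (∫ x in (0 : ℝ)..2, Real.sin (π * x) ^ 2 / x ^ 2)
        = 2 * (∫ t in (0 : ℝ)..(4 * π), Real.sin t / t) / π) := by
  have hπ := Real.pi_ne_zero
  have h2int : (∫ x in (0:ℝ)..2, Real.sin (π * x) ^ 2 / x ^ 2)
      = π * ∫ t in (0:ℝ)..(4 * π), Real.sin t / t := by
    have h := aux_intKey 2
    norm_num at h
    rw [show (2:ℝ) * π * 2 = 4 * π by ring] at h
    exact h
  have h2sum : (∑ h ∈ Finset.Icc (-2 : ℤ) 1,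
        ∫ x in (0 : ℝ)..(1 / 2), Real.sin (π * x) ^ 2 / (x + h) ^ 2)
      = ∫ x in (0 : ℝ)..2, Real.sin (π * x) ^ 2 / x ^ 2 := by
    have h := aux_sumKey 2
    norm_num at h
    exact h
  refine ⟨?_, ?_, ?_⟩
  · intro q
    rw [← Finset.mul_sum]
    have hcast1 : (-(2 ^ (q + 1)) : ℤ) = -((2 ^ (q+1) : ℕ) : ℤ) := by push_cast; ring
    have hcast2 : ((2 ^ (q + 1) - 1) : ℤ) = ((2 ^ (q+1) : ℕ) : ℤ) - 1 := by push_cast; ring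
    rw [hcast1, hcast2, aux_sumKey (2 ^ (q+1)), aux_intKey (2 ^ (q+1))]
    have h2 : (2:ℝ) * π * ((2 ^ (q+1) : ℕ) : ℝ) = 2 ^ (q + 2) * π := by
      push_cast
      rw [pow_succ]
      ring
    rw [h2]
    field_simp
  · rw [← Finset.mul_sum, h2sum]
  · rw [h2int]
    field_simp
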